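/- Let C be a vertex cover of a graph G=(V,E). Suppose (L^C,X^C,R^C) is a valid partition of C, τ− is either introduce(u) for some u∈X^C with N(u)∩L^C=∅ or forget(u) for some u∈L^C, and τ+ is either introduce(v) for some v∈R^C or forget(v) for some v∈X^C with N(v)∩R^C=∅. Then (τ−,L^C,X^C,R^C,τ+) is a valid quintuple, i.e., it is respected by some nice path decomposition of G. -/

import Mathlib

open scoped Classical

noncomputable section

/-- Operations labelling the nodes of a nice tree decomposition.  For a `join`
we record the trace of the bag on the vertex cover together with the traces of
the lower sets of the two children. -/
inductive TDOp (V : Type) where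
  | introduce (u : V)
  | forget (u : V)
  | join (X L1 L2 : Set V)

/-- `i` is an ancestor of `j` (inclusively) with respect to the parent function `parent`. -/
def ancestorOf {ι : Type} (parent : ι → ι) (i j : ι) : Prop :=
  ∃ n : ℕ, parent^[n] j = i

/-- `k` lies on the unique tree path between `i` and `j` in the rooted tree given by `parent`. -/
def betweenNodes {ι : Type} (parent : ι → ι) (k i j : ι) : Prop :=
  (ancestorOf parent k i ∨ ancestorOf parent k j) ∧
    ∀ l, ancestorOf parent l i → ancestorOf parent l j → ancestorOf parent l k

/-- A rooted tree decomposition of a graph `G`, encoded via a parent function on the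
node set `ι`:  every node reaches the root by iterating `parent`; the bags cover the
vertices and the edges, and the set of bags containing a fixed vertex is connected
(it is closed under taking nodes on tree paths). -/
structure RootedTreeDecomp (V ι : Type) (G : SimpleGraph V) where
  root : ι
  parent : ι → ι
  parent_root : parent root = root
  reaches_root : ∀ i, ancestorOf parent root i
  bag : ι → Finset V
  bag_cover : ∀ v, ∃ i, v ∈ bag i
  bag_edge : ∀ u v, G.Adj u v → ∃ i, u ∈ bag i ∧ v ∈ bag i
  bag_conn : ∀ v i j k, v ∈ bag i → v ∈ bag j → betweenNodes parent k i j → v ∈ bag k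

namespace RootedTreeDecomp

variable {V ι : Type} {G : SimpleGraph V} (t : RootedTreeDecomp V ι G)

/-- `i` is an ancestor of `j` (inclusively). -/
def anc (i j : ι) : Prop := ancestorOf t.parent i j

/-- `V_i` : the union of the bags of the subtree rooted at `i`. -/
def subVerts (i : ι) : Set V := {v | ∃ j, t.anc i j ∧ v ∈ t.bag j}

/-- `L_i = V_i ∖ X_i`. -/
def Lset (i : ι) : Set V := t.subVerts i \ ↑(t.bag i)

/-- `R_i = V ∖ V_i`. -/
def Rset (i : ι) : Set V := Set.univ \ t.subVerts i

/-- The trace of node `i` on `C` is the three-partition `(L_i ∩ C, X_i ∩ C, R_i ∩ C)` of `C`. -/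
def HasTrace (C : Set V) (i : ι) (LC XC RC : Set V) : Prop :=
  LC = t.Lset i ∩ C ∧ XC = (↑(t.bag i) : Set V) ∩ C ∧ RC = t.Rset i ∩ C

/-- The children of a node. -/
def children (i : ι) : Set ι := {j | j ≠ t.root ∧ t.parent j = i}

/-- A leaf node: no children and a bag of size one. -/
def IsLeafNode (i : ι) : Prop := t.children i = ∅ ∧ ∃ u, t.bag i = {u}

/-- An introduce node. -/
def IsIntroduceNode [DecidableEq V] (i : ι) : Prop :=
  ∃ j u, t.children i = {j} ∧ u ∉ t.bag j ∧ t.bag i = insert u (t.bag j)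

/-- A forget node. -/
def IsForgetNode [DecidableEq V] (i : ι) : Prop :=
  ∃ j u, t.children i = {j} ∧ u ∈ t.bag j ∧ t.bag i = (t.bag j).erase u

/-- A join node. -/
def IsJoinNode (i : ι) : Prop :=
  ∃ j k, j ≠ k ∧ t.children i = ({j, k} : Set ι) ∧ t.bag j = t.bag i ∧ t.bag k = t.bag i

/-- A nice tree decomposition: every node is a leaf, introduce, forget or join node. -/
def IsNice [DecidableEq V] : Prop :=
  ∀ i, t.IsLeafNode i ∨ t.IsIntroduceNode i ∨ t.IsForgetNode i ∨ t.IsJoinNode i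

/-- A nice path decomposition: every node is a leaf, introduce or forget node. -/
def IsNicePath [DecidableEq V] : Prop :=
  ∀ i, t.IsLeafNode i ∨ t.IsIntroduceNode i ∨ t.IsForgetNode i

/-- The operation `op` is the operation `τ_i` performed at node `i`
(join operations are recorded through their traces on the vertex cover `C`). -/
def HasOp [DecidableEq V] (C : Set V) (i : ι) : TDOp V → Prop
  | TDOp.introduce u =>
      (t.children i = ∅ ∧ t.bag i = {u}) ∨
        ∃ j, t.children i = {j} ∧ u ∉ t.bag j ∧ t.bag i = insert u (t.bag j)
  | TDOp.forget u =>
      ∃ j, t.children i = {j} ∧ u ∈ t.bag j ∧ t.bag i = (t.bag j).erase u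
  | TDOp.join X L1 L2 =>
      ∃ j k, j ≠ k ∧ t.children i = ({j, k} : Set ι) ∧ t.bag j = t.bag i ∧ t.bag k = t.bag i ∧
        X = (↑(t.bag i) : Set V) ∩ C ∧ L1 = t.Lset j ∩ C ∧ L2 = t.Lset k ∩ C

/-- The width of a rooted tree decomposition: maximum bag size minus one. -/
def width [Fintype ι] : ℕ := (Finset.univ.sup fun i => (t.bag i).card) - 1

end RootedTreeDecomp

/-- A quintuple `(τ₋, L^C, X^C, R^C, τ₊)`. -/
structure TDQuint (V : Type) where
  tauL : TDOp V
  LC : Set V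
  XC : Set V
  RC : Set V
  tauR : TDOp V

/-- `C` is a vertex cover of `G`. -/
def IsVertexCover {V : Type} (G : SimpleGraph V) (C : Set V) : Prop :=
  ∀ u v, G.Adj u v → u ∈ C ∨ v ∈ C

/-- `X` separates `A` from `B` in the subgraph of `G` induced by `D`: there is no walk
between a vertex of `A` and a vertex of `B` all of whose vertices avoid `X` and stay in `D`. -/
def SeparatesIn {V : Type} (G : SimpleGraph V) (D X A B : Set V) : Prop :=
  ∀ a ∈ A, ∀ b ∈ B, ¬ ∃ p : G.Walk a b, ∀ v ∈ p.support, v ∈ D \ X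

/-- `(LC, XC, RC)` is a valid partition of `C`: it is the trace on `C` of some node of some
rooted tree decomposition of `G`. -/
def ValidPartition {V : Type} (G : SimpleGraph V) (C LC XC RC : Set V) : Prop :=
  ∃ (ι : Type) (t : RootedTreeDecomp V ι G) (i : ι), t.HasTrace C i LC XC RC

section

variable {V ι : Type} [DecidableEq V] {G : SimpleGraph V}

/-- The decomposition `t` respects the (non-degenerate) quintuple `Q`, with `imin` and `imax`
as lowest and highest nodes of the subpath of nodes whose trace on `C` is `(LC, XC, RC)`:
the operation at `imin` is `τ₋`, and the operation at the father of `imax` is `τ₊`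
(taken to be `forget w` on the root bag `{w}` when `imax` is the root). -/
def RespectsAtND (t : RootedTreeDecomp V ι G) (C : Set V) (Q : TDQuint V)
    (imin imax : ι) : Prop :=
  t.HasTrace C imin Q.LC Q.XC Q.RC ∧ t.HasTrace C imax Q.LC Q.XC Q.RC ∧ t.anc imax imin ∧
    (∀ i, t.HasTrace C i Q.LC Q.XC Q.RC → t.anc i imin ∧ t.anc imax i) ∧
    t.HasOp C imin Q.tauL ∧
    ((imax = t.root ∧ ∃ w, t.bag t.root = {w} ∧ Q.tauR = TDOp.forget w) ∨
      (imax ≠ t.root ∧ t.HasOp C (t.parent imax) Q.tauR))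

/-- The decomposition `t` respects the degenerate quintuple `Q` at node `i`: node `i` has
trace `(∅, XC, RC)` on `C` and its father performs the forget operation `τ₊`. -/
def RespectsAtDeg (t : RootedTreeDecomp V ι G) (C : Set V) (Q : TDQuint V) (i : ι) : Prop :=
  t.HasTrace C i Q.LC Q.XC Q.RC ∧
    ∃ u, Q.tauR = TDOp.forget u ∧ i ≠ t.root ∧ t.HasOp C (t.parent i) (TDOp.forget u)

/-- The decomposition `t` respects the quintuple `Q`, witnessed by the nodes `imin`, `imax`. -/
def RespectsAt (t : RootedTreeDecomp V ι G) (C : Set V) (Q : TDQuint V)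
    (imin imax : ι) : Prop :=
  (Q.LC ≠ ∅ ∧ RespectsAtND t C Q imin imax) ∨
    (Q.LC = ∅ ∧ imin = imax ∧ RespectsAtDeg t C Q imax)

/-- The decomposition `t` respects the quintuple `Q`. -/
def Respects (t : RootedTreeDecomp V ι G) (C : Set V) (Q : TDQuint V) : Prop :=
  ∃ imin imax, RespectsAt t C Q imin imax

end

/-- Valid quintuples (tree-decomposition version), including the degenerate ones. -/
def ValidQuintT {V : Type} [DecidableEq V] (G : SimpleGraph V) (C : Set V)
    (Q : TDQuint V) : Prop :=
  (Q.LC ≠ ∅ ∧ ∃ (ι : Type) (t : RootedTreeDecomp V ι G), t.IsNice ∧ Respects t C Q) ∨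
    (Q.LC = ∅ ∧ ValidPartition G C ∅ Q.XC Q.RC ∧
      ∃ u, u ∈ Q.XC ∧ G.neighborSet u ⊆ Q.XC ∧ Q.tauR = TDOp.forget u)

/-- Valid quintuples (path-decomposition version): `Q` is respected by some nice path
decomposition of `G`. -/
def ValidQuintP {V : Type} [DecidableEq V] (G : SimpleGraph V) (C : Set V)
    (Q : TDQuint V) : Prop :=
  ∃ (ι : Type) (t : RootedTreeDecomp V ι G), t.IsNicePath ∧
    ∃ imin imax, RespectsAtND t C Q imin imax

section

variable {V : Type} [DecidableEq V]

/-- `XTR^S(Q)`: vertices of `S = V ∖ C` having neighbours in both `L^C` and `R^C`. -/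
def XTRset (G : SimpleGraph V) (C : Set V) (Q : TDQuint V) : Set V :=
  {x | x ∉ C ∧ (G.neighborSet x ∩ Q.LC).Nonempty ∧ (G.neighborSet x ∩ Q.RC).Nonempty}

/-- `XL^S(Q)`. -/
def XLset (G : SimpleGraph V) (C : Set V) (Q : TDQuint V) : Set V :=
  match Q.tauL with
  | TDOp.introduce u =>
      {x | x ∉ C ∧ G.neighborSet x ⊆ Q.LC ∪ Q.XC ∧ u ∈ G.neighborSet x ∧
        (G.neighborSet x ∩ Q.LC).Nonempty}
  | TDOp.forget _ => ∅
  | TDOp.join _ L1 L2 =>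
      {x | x ∉ C ∧ (G.neighborSet x ∩ L1).Nonempty ∧ (G.neighborSet x ∩ L2).Nonempty ∧
        G.neighborSet x ∩ Q.RC = ∅}

/-- `XR^S(Q)`. -/
def XRset (G : SimpleGraph V) (C : Set V) (Q : TDQuint V) : Set V :=
  match Q.tauR with
  | TDOp.forget v =>
      {x | x ∉ C ∧ G.neighborSet x ⊆ Q.RC ∪ Q.XC ∧ v ∈ G.neighborSet x ∧
        (G.neighborSet x ∩ Q.RC).Nonempty}
  | _ => ∅

/-- `ε(Q)` (treewidth version): `1` if some vertex of `S` has neighbourhood exactly `X^C`. -/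
def epsT (G : SimpleGraph V) (C : Set V) (Q : TDQuint V) : ℕ :=
  if ∃ x, x ∉ C ∧ G.neighborSet x = Q.XC then 1 else 0

/-- The local treewidth of a quintuple. -/
def loctw (G : SimpleGraph V) (C : Set V) (Q : TDQuint V) : ℕ :=
  Q.XC.ncard +
    max (max ((XTRset G C Q).ncard + (XLset G C Q).ncard)
      ((XTRset G C Q).ncard + (XRset G C Q).ncard)) (epsT G C Q) - 1

/-- Fuelled version of the partial treewidth recursion. -/
def ptwAux (G : SimpleGraph V) (C : Set V) : ℕ → TDQuint V → ℕ
  | 0, Q => loctw G C Q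
  | m + 1, Q =>
    if Q.LC = ∅ then loctw G C Q
    else
      match Q.tauL with
      | TDOp.introduce u =>
          max (loctw G C Q)
            (sInf {n | ∃ τ,
              ValidQuintT G C ⟨τ, Q.LC, Q.XC \ {u}, Q.RC ∪ {u}, TDOp.introduce u⟩ ∧
              n = ptwAux G C m ⟨τ, Q.LC, Q.XC \ {u}, Q.RC ∪ {u}, TDOp.introduce u⟩})
      | TDOp.forget u =>
          max (loctw G C Q)
            (sInf {n | ∃ τ,
              ValidQuintT G C ⟨τ, Q.LC \ {u}, Q.XC ∪ {u}, Q.RC, TDOp.forget u⟩ ∧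
              n = ptwAux G C m ⟨τ, Q.LC \ {u}, Q.XC ∪ {u}, Q.RC, TDOp.forget u⟩})
      | TDOp.join _ L1 L2 =>
          max (loctw G C Q)
            (max
              (sInf {n | ∃ τ,
                ValidQuintT G C ⟨τ, L1, Q.XC, Q.RC ∪ L2, TDOp.join Q.XC L1 L2⟩ ∧
                n = ptwAux G C m ⟨τ, L1, Q.XC, Q.RC ∪ L2, TDOp.join Q.XC L1 L2⟩})
              (sInf {n | ∃ τ,
                ValidQuintT G C ⟨τ, L2, Q.XC, Q.RC ∪ L1, TDOp.join Q.XC L1 L2⟩ ∧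
                n = ptwAux G C m ⟨τ, L2, Q.XC, Q.RC ∪ L1, TDOp.join Q.XC L1 L2⟩}))

/-- The partial treewidth `ptw(Q)` of a quintuple (defined with sufficient fuel:
each recursive step strictly decreases `2·|L^C| + |X^C|`). -/
def ptw (G : SimpleGraph V) (C : Set V) (Q : TDQuint V) : ℕ :=
  ptwAux G C (2 * Q.LC.ncard + Q.XC.ncard) Q

/-- `X^C_-` : the bag trace just below `imin`. -/
def XCminus (Q : TDQuint V) : Set V :=
  match Q.tauL with
  | TDOp.introduce u => Q.XC \ {u}
  | TDOp.forget u => Q.XC ∪ {u}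
  | TDOp.join _ _ _ => Q.XC

/-- `X^C_+` : the bag trace just above `imax`. -/
def XCplus (Q : TDQuint V) : Set V :=
  match Q.tauR with
  | TDOp.introduce v => Q.XC ∪ {v}
  | TDOp.forget v => Q.XC \ {v}
  | TDOp.join _ _ _ => Q.XC

/-- `XF^S(Q)` (pathwidth version). -/
def XFPset (G : SimpleGraph V) (C : Set V) (Q : TDQuint V) : Set V :=
  {x | x ∉ C ∧ G.neighborSet x ⊆ Q.XC ∧
    (XCminus Q ⊂ Q.XC → ¬ G.neighborSet x ⊆ XCminus Q) ∧
    (XCplus Q ⊂ Q.XC → ¬ G.neighborSet x ⊆ XCplus Q)}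

/-- `ε(Q)` (pathwidth version). -/
def epsP (G : SimpleGraph V) (C : Set V) (Q : TDQuint V) : ℕ :=
  if (XFPset G C Q).Nonempty then 1 else 0

/-- The local pathwidth of a quintuple. -/
def locpw (G : SimpleGraph V) (C : Set V) (Q : TDQuint V) : ℕ :=
  Q.XC.ncard + (XTRset G C Q).ncard +
    max (max (XLset G C Q).ncard (XRset G C Q).ncard) (epsP G C Q) - 1

/-- Fuelled version of the partial pathwidth recursion. -/
def ppwAux (G : SimpleGraph V) (C : Set V) : ℕ → TDQuint V → ℕ
  | 0, Q => locpw G C Q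
  | m + 1, Q =>
    if ∃ u, Q.tauL = TDOp.introduce u ∧ Q.LC = ∅ ∧ Q.XC = {u} ∧ Q.RC = C \ {u} then
      locpw G C Q
    else
      match Q.tauL with
      | TDOp.introduce u =>
          max (locpw G C Q)
            (sInf {n | ∃ τ,
              ValidQuintP G C ⟨τ, Q.LC, Q.XC \ {u}, Q.RC ∪ {u}, TDOp.introduce u⟩ ∧
              n = ppwAux G C m ⟨τ, Q.LC, Q.XC \ {u}, Q.RC ∪ {u}, TDOp.introduce u⟩})
      | TDOp.forget u =>
          max (locpw G C Q)
            (sInf {n | ∃ τ,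
              ValidQuintP G C ⟨τ, Q.LC \ {u}, Q.XC ∪ {u}, Q.RC, TDOp.forget u⟩ ∧
              n = ppwAux G C m ⟨τ, Q.LC \ {u}, Q.XC ∪ {u}, Q.RC, TDOp.forget u⟩})
      | TDOp.join _ _ _ => locpw G C Q

/-- The partial pathwidth `ppw(Q)` of a quintuple. -/
def ppw (G : SimpleGraph V) (C : Set V) (Q : TDQuint V) : ℕ :=
  ppwAux G C (2 * Q.LC.ncard + Q.XC.ncard) Q

end

end

namespace VQP
set_option linter.unusedSectionVars false

theorem anc_trans {ι : Type} (p : ι → ι) {i j k : ι}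
    (h1 : ancestorOf p i j) (h2 : ancestorOf p k i) : ancestorOf p k j := by
  obtain ⟨a, ha⟩ := h1; obtain ⟨b, hb⟩ := h2
  exact ⟨b + a, by rw [Function.iterate_add_apply, ha, hb]⟩

theorem anc_comparable {ι : Type} (p : ι → ι) {j m i : ι}
    (hm : ancestorOf p m j) (hi : ancestorOf p i j) :
    ancestorOf p m i ∨ ancestorOf p i m := by
  obtain ⟨a, ha⟩ := hm; obtain ⟨b, hb⟩ := hi
  rcases le_total a b with h | h
  · right
    exact ⟨b - a, by rw [← ha, ← Function.iterate_add_apply, ← hb]; congr 1; omega⟩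
  · left
    exact ⟨a - b, by rw [← hb, ← Function.iterate_add_apply, ← ha]; congr 1; omega⟩

def pparent (n : ℕ) (i : Fin (n+1)) : Fin (n+1) := ⟨min ((i:ℕ)+1) n, by omega⟩

theorem pparent_val (n : ℕ) (i : Fin (n+1)) : (pparent n i : ℕ) = min ((i:ℕ)+1) n := rfl

theorem pparent_iter (n m : ℕ) (j : Fin (n+1)) :
    (((pparent n)^[m] j : Fin (n+1)) : ℕ) = min ((j:ℕ) + m) n := by
  induction m with
  | zero => have := j.isLt; simp; omega
  | succ m ih =>
      rw [Function.iterate_succ_apply', pparent_val, ih]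
      omega

theorem anc_iff (n : ℕ) (i j : Fin (n+1)) :
    ancestorOf (pparent n) i j ↔ (j:ℕ) ≤ (i:ℕ) := by
  constructor
  · rintro ⟨m, hm⟩
    have h := pparent_iter n m j
    rw [hm] at h
    have := i.isLt
    omega
  · intro h
    refine ⟨(i:ℕ) - (j:ℕ), Fin.ext ?_⟩
    rw [pparent_iter]
    have := i.isLt
    omega

theorem between_iff (n : ℕ) (k i j : Fin (n+1)) :
    betweenNodes (pparent n) k i j ↔
      (min (i:ℕ) (j:ℕ) ≤ (k:ℕ) ∧ (k:ℕ) ≤ max (i:ℕ) (j:ℕ)) := by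
  have hi := i.isLt; have hj := j.isLt; have hk := k.isLt
  constructor
  · rintro ⟨h1, h2⟩
    rw [anc_iff, anc_iff] at h1
    constructor
    · omega
    · have := h2 ⟨max (i:ℕ) (j:ℕ), by omega⟩ ((anc_iff _ _ _).2 (by simp))
        ((anc_iff _ _ _).2 (by simp))
      rw [anc_iff] at this
      simpa using this
  · rintro ⟨h1, h2⟩
    constructor
    · rw [anc_iff, anc_iff]; omega
    · intro l hli hlj
      rw [anc_iff] at hli hlj ⊢
      omega

/-- Facts from a valid partition. -/
theorem no_LR_adj {V ι : Type} {G : SimpleGraph V} (t : RootedTreeDecomp V ι G) (i : ι)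
    {l r : V} (hl : l ∈ t.Lset i) (hr : r ∈ t.Rset i) : ¬ G.Adj l r := by
  intro hadj
  obtain ⟨j, hlj, hrj⟩ := t.bag_edge l r hadj
  by_cases hij : t.anc i j
  · exact hr.2 ⟨j, hij, hrj⟩
  · obtain ⟨⟨j', hij', hlj'⟩, hlb⟩ := hl
    apply hlb
    refine t.bag_conn l j j' i hlj hlj' ⟨Or.inr hij', ?_⟩
    intro m hmj hmj'
    rcases anc_comparable t.parent hmj' hij' with h | h
    · exact h
    · exact absurd (anc_trans t.parent hmj h) hij

section Layout

variable {V : Type} [Fintype V] [DecidableEq V] {G : SimpleGraph V}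

/-- Data describing a nice path decomposition through intervals `[A v, B v)`. -/
structure Layout (G : SimpleGraph V) (n : ℕ) (A B : V → ℕ) : Prop where
  hAB : ∀ v, A v < B v
  hAn : ∀ v, A v ≤ n
  hBn : ∀ v, B v ≤ n + 1
  huniq : ∀ (i : ℕ), i ≤ n → ∀ (v w : V), (A v = i ∨ B v = i) → (A w = i ∨ B w = i) → v = w
  hexi : ∀ i, i ≤ n → ∃ v, A v = i ∨ B v = i
  hedge : ∀ a b, G.Adj a b → A a < B b

variable {n : ℕ} {A B : V → ℕ}

/-- The nice path decomposition associated to a layout. -/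
def mkDecomp (L : Layout G n A B) : RootedTreeDecomp V (Fin (n+1)) G where
  root := Fin.last n
  parent := pparent n
  parent_root := by
    apply Fin.ext
    rw [pparent_val]
    simp [Fin.last]
  reaches_root := fun i => (anc_iff n _ i).2 (by simp [Fin.last, Fin.is_le i])
  bag := fun i => Finset.univ.filter fun v => A v ≤ (i:ℕ) ∧ (i:ℕ) < B v
  bag_cover := fun v => ⟨⟨A v, by have := L.hAn v; omega⟩, by
    simp [L.hAB v]⟩
  bag_edge := by
    intro a b hab
    have h1 := L.hedge a b hab
    have h2 := L.hedge b a hab.symm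
    have h3 := L.hAn a; have h4 := L.hAn b
    have h5 := L.hAB a; have h6 := L.hAB b
    refine ⟨⟨max (A a) (A b), by omega⟩, ?_, ?_⟩ <;> simp <;> omega
  bag_conn := by
    intro v i j k hvi hvj hbet
    rw [between_iff] at hbet
    simp only [Finset.mem_filter, Finset.mem_univ, true_and] at hvi hvj ⊢
    omega

set_option linter.unusedSectionVars false in
theorem parent_mk (L : Layout G n A B) : (mkDecomp L).parent = pparent n := rfl

set_option linter.unusedSectionVars false in
theorem root_mk (L : Layout G n A B) : (mkDecomp L).root = Fin.last n := rfl

set_option linter.unusedSectionVars false in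
theorem bag_mk (L : Layout G n A B) (i : Fin (n+1)) (v : V) :
    v ∈ (mkDecomp L).bag i ↔ (A v ≤ (i:ℕ) ∧ (i:ℕ) < B v) := by
  simp [mkDecomp]

set_option linter.unusedSectionVars false in
theorem anc_mk (L : Layout G n A B) (i j : Fin (n+1)) :
    (mkDecomp L).anc i j ↔ (j:ℕ) ≤ (i:ℕ) := anc_iff n i j

theorem subVerts_mk (L : Layout G n A B) (i : Fin (n+1)) :
    (mkDecomp L).subVerts i = {v | A v ≤ (i:ℕ)} := by
  ext v
  constructor
  · rintro ⟨j, hij, hvj⟩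
    rw [anc_mk] at hij
    rw [bag_mk] at hvj
    simp only [Set.mem_setOf_eq]
    omega
  · intro hv
    simp only [Set.mem_setOf_eq] at hv
    refine ⟨⟨A v, by have := L.hAn v; omega⟩, ?_, ?_⟩
    · rw [anc_mk]; exact hv
    · rw [bag_mk]; simp [L.hAB v]

theorem Lset_mk (L : Layout G n A B) (i : Fin (n+1)) :
    (mkDecomp L).Lset i = {v | B v ≤ (i:ℕ)} := by
  ext v
  rw [RootedTreeDecomp.Lset, Set.mem_diff, subVerts_mk]
  have h1 := L.hAB v
  constructor
  · rintro ⟨h2, h3⟩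
    rw [Finset.mem_coe, bag_mk] at h3
    simp only [Set.mem_setOf_eq] at h2 ⊢
    omega
  · intro h2
    simp only [Set.mem_setOf_eq] at h2 ⊢
    refine ⟨by omega, ?_⟩
    rw [Finset.mem_coe, bag_mk]
    omega

theorem Rset_mk (L : Layout G n A B) (i : Fin (n+1)) :
    (mkDecomp L).Rset i = {v | (i:ℕ) < A v} := by
  ext v
  rw [RootedTreeDecomp.Rset, Set.mem_diff, subVerts_mk]
  simp only [Set.mem_setOf_eq, Set.mem_univ, true_and]
  omega

theorem children_mk_zero (L : Layout G n A B) (i : Fin (n+1)) (hi : (i:ℕ) = 0) :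
    (mkDecomp L).children i = ∅ := by
  ext j
  simp only [RootedTreeDecomp.children, Set.mem_setOf_eq, Set.mem_empty_iff_false, iff_false,
    not_and]
  intro hj hpar
  rw [parent_mk] at hpar
  have h2 : (pparent n j : ℕ) = (i:ℕ) := congrArg Fin.val hpar
  rw [pparent_val] at h2
  have hjl := j.isLt
  exact hj (Fin.ext (by rw [root_mk, Fin.val_last]; omega))

theorem children_mk_succ (L : Layout G n A B) (i : Fin (n+1)) (hi : 1 ≤ (i:ℕ)) :
    (mkDecomp L).children i = {(⟨(i:ℕ) - 1, by omega⟩ : Fin (n+1))} := by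
  have hil := i.isLt
  ext j
  have hjl := j.isLt
  simp only [RootedTreeDecomp.children, Set.mem_setOf_eq, Set.mem_singleton_iff]
  constructor
  · rintro ⟨hj, hpar⟩
    rw [parent_mk] at hpar
    have h2 : (pparent n j : ℕ) = (i:ℕ) := congrArg Fin.val hpar
    rw [pparent_val] at h2
    have hjr : (j:ℕ) ≠ n := fun h => hj (Fin.ext (by rw [root_mk, Fin.val_last]; omega))
    apply Fin.ext
    show (j:ℕ) = (i:ℕ) - 1
    omega
  · intro hj
    subst hj
    refine ⟨fun h => ?_, Fin.ext ?_⟩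
    · have h2 : ((i:ℕ) - 1) = n := by
        have := congrArg Fin.val h
        rw [root_mk, Fin.val_last] at this
        exact this
      omega
    · rw [parent_mk, pparent_val]
      show min ((i:ℕ) - 1 + 1) n = (i:ℕ)
      omega

theorem bag_step_intro (L : Layout G n A B) (i : ℕ) (v : V) (h1 : 1 ≤ i) (h2 : i ≤ n)
    (hv : A v = i) :
    v ∉ (mkDecomp L).bag ⟨i - 1, by omega⟩ ∧
      (mkDecomp L).bag ⟨i, by omega⟩ =
        insert v ((mkDecomp L).bag ⟨i - 1, by omega⟩) := by
  constructor
  · rw [bag_mk]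
    show ¬(A v ≤ i - 1 ∧ i - 1 < B v)
    omega
  · ext w
    rw [bag_mk, Finset.mem_insert, bag_mk]
    by_cases hw : w = v
    · subst hw
      have := L.hAB w
      simp only [true_or, iff_true]
      omega
    · have hA : A w ≠ i := fun h => hw (L.huniq i h2 w v (Or.inl h) (Or.inl hv))
      have hB : B w ≠ i := fun h => hw (L.huniq i h2 w v (Or.inr h) (Or.inl hv))
      simp only [hw, false_or]
      omega

theorem bag_step_forget (L : Layout G n A B) (i : ℕ) (v : V) (h1 : 1 ≤ i) (h2 : i ≤ n)
    (hv : B v = i) :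
    v ∈ (mkDecomp L).bag ⟨i - 1, by omega⟩ ∧
      (mkDecomp L).bag ⟨i, by omega⟩ =
        ((mkDecomp L).bag ⟨i - 1, by omega⟩).erase v := by
  have hAv := L.hAB v
  constructor
  · rw [bag_mk]
    show A v ≤ i - 1 ∧ i - 1 < B v
    omega
  · ext w
    rw [bag_mk, Finset.mem_erase, bag_mk]
    by_cases hw : w = v
    · subst hw
      simp only [ne_eq, not_true_eq_false, false_and, iff_false]
      omega
    · have hA : A w ≠ i := fun h => hw (L.huniq i h2 w v (Or.inl h) (Or.inr hv))
      have hB : B w ≠ i := fun h => hw (L.huniq i h2 w v (Or.inr h) (Or.inr hv))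
      simp only [ne_eq, hw, not_false_eq_true, true_and]
      omega

theorem bag_mk_zero (L : Layout G n A B) (v : V) (hv : A v = 0) :
    (mkDecomp L).bag ⟨0, by omega⟩ = {v} := by
  ext w
  rw [bag_mk, Finset.mem_singleton]
  show (A w ≤ 0 ∧ 0 < B w) ↔ w = v
  constructor
  · rintro ⟨h1, h2⟩
    have hA : A w = 0 := by omega
    exact L.huniq 0 (Nat.zero_le n) w v (Or.inl hA) (Or.inl hv)
  · intro h
    subst h
    have := L.hAB w
    omega

theorem hasOp_intro (L : Layout G n A B) (C : Set V) (i : ℕ) (v : V) (hi : i ≤ n)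
    (hv : A v = i) :
    (mkDecomp L).HasOp C ⟨i, by omega⟩ (TDOp.introduce v) := by
  rcases Nat.eq_zero_or_pos i with h0 | h1
  · subst h0
    left
    exact ⟨children_mk_zero L _ rfl, bag_mk_zero L v hv⟩
  · right
    obtain ⟨hnot, hins⟩ := bag_step_intro L i v h1 hi hv
    exact ⟨⟨i - 1, by omega⟩, children_mk_succ L ⟨i, by omega⟩ h1, hnot, hins⟩

theorem hasOp_forget (L : Layout G n A B) (C : Set V) (i : ℕ) (v : V) (h1 : 1 ≤ i)
    (hi : i ≤ n) (hv : B v = i) :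
    (mkDecomp L).HasOp C ⟨i, by omega⟩ (TDOp.forget v) := by
  obtain ⟨hmem, hers⟩ := bag_step_forget L i v h1 hi hv
  exact ⟨⟨i - 1, by omega⟩, children_mk_succ L ⟨i, by omega⟩ h1, hmem, hers⟩

theorem mk_nicePath (L : Layout G n A B) : (mkDecomp L).IsNicePath := by
  intro i
  have hil := i.isLt
  rcases Nat.eq_zero_or_pos (i:ℕ) with h0 | h1
  · left
    refine ⟨children_mk_zero L i h0, ?_⟩
    obtain ⟨v, hv⟩ := L.hexi 0 (by omega)
    have hv0 : A v = 0 := by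
      rcases hv with h | h
      · exact h
      · have := L.hAB v; omega
    refine ⟨v, ?_⟩
    have hieq : i = (⟨0, by omega⟩ : Fin (n+1)) := Fin.ext h0
    rw [hieq]
    exact bag_mk_zero L v hv0
  · obtain ⟨v, hv⟩ := L.hexi (i:ℕ) (by omega)
    rcases hv with h | h
    · right; left
      obtain ⟨hnot, hins⟩ := bag_step_intro L (i:ℕ) v h1 (by omega) h
      exact ⟨⟨(i:ℕ) - 1, by omega⟩, v, children_mk_succ L i h1, hnot, hins⟩
    · right; right
      obtain ⟨hmem, hers⟩ := bag_step_forget L (i:ℕ) v h1 (by omega) h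
      exact ⟨⟨(i:ℕ) - 1, by omega⟩, v, children_mk_succ L i h1, hmem, hers⟩

end Layout
section Master

variable {V : Type} [Fintype V] [DecidableEq V] {G : SimpleGraph V}

theorem master (C : Set V) (Q : TDQuint V) (n k : ℕ) (A B : V → ℕ)
    (L : Layout G n A B) (hk : k < n)
    (h1 : {v | B v ≤ k} ∩ C = Q.LC)
    (h2 : {v | A v ≤ k ∧ k < B v} ∩ C = Q.XC)
    (h3 : {v | k < A v} ∩ C = Q.RC)
    (hOpL : (∃ u, Q.tauL = TDOp.introduce u ∧ A u = k ∧ u ∈ Q.XC) ∨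
            (∃ u, Q.tauL = TDOp.forget u ∧ B u = k ∧ 1 ≤ k ∧ u ∈ Q.LC))
    (hOpR : (∃ v, Q.tauR = TDOp.introduce v ∧ A v = k + 1 ∧ v ∈ Q.RC) ∨
            (∃ v, Q.tauR = TDOp.forget v ∧ B v = k + 1 ∧ v ∈ Q.XC)) :
    ValidQuintP G C Q := by
  refine ⟨Fin (n+1), mkDecomp L, mk_nicePath L, ⟨k, by omega⟩, ⟨k, by omega⟩, ?_, ?_, ?_, ?_, ?_, ?_⟩
  -- trace at imin = imax = ⟨k⟩
  · refine ⟨?_, ?_, ?_⟩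
    · rw [Lset_mk]
      exact h1.symm
    · rw [show ((((mkDecomp L).bag ⟨k, by omega⟩ : Finset V) : Set V)) =
        {v | A v ≤ k ∧ k < B v} from ?_]
      · exact h2.symm
      · ext v
        rw [Finset.mem_coe, bag_mk]
        rfl
    · rw [Rset_mk]
      exact h3.symm
  · refine ⟨?_, ?_, ?_⟩
    · rw [Lset_mk]; exact h1.symm
    · rw [show ((((mkDecomp L).bag ⟨k, by omega⟩ : Finset V) : Set V)) =
        {v | A v ≤ k ∧ k < B v} from ?_]
      · exact h2.symm
      · ext v
        rw [Finset.mem_coe, bag_mk]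
        rfl
    · rw [Rset_mk]; exact h3.symm
  · rw [anc_mk]
  -- uniqueness
  · intro i hti
    obtain ⟨t1, t2, t3⟩ := hti
    rw [Lset_mk] at t1
    rw [Rset_mk] at t3
    have t2' : Q.XC = {v | A v ≤ (i:ℕ) ∧ (i:ℕ) < B v} ∩ C := by
      rw [t2]
      congr 1
      ext v
      rw [Finset.mem_coe, bag_mk]
      rfl
    have hlow : k ≤ (i:ℕ) := by
      rcases hOpL with ⟨u, htau, hA, hX⟩ | ⟨u, htau, hB, hk1, hLmem⟩
      · rw [t2'] at hX
        simp only [Set.mem_inter_iff, Set.mem_setOf_eq] at hX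
        omega
      · rw [t1] at hLmem
        simp only [Set.mem_inter_iff, Set.mem_setOf_eq] at hLmem
        omega
    have hhigh : (i:ℕ) ≤ k := by
      rcases hOpR with ⟨v, htau, hA, hX⟩ | ⟨v, htau, hB, hX⟩
      · rw [t3] at hX
        simp only [Set.mem_inter_iff, Set.mem_setOf_eq] at hX
        omega
      · rw [t2'] at hX
        simp only [Set.mem_inter_iff, Set.mem_setOf_eq] at hX
        omega
    constructor
    · rw [anc_mk]
      show k ≤ (i:ℕ)
      omega
    · rw [anc_mk]
      show (i:ℕ) ≤ k
      omega
  -- operation at imin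
  · rcases hOpL with ⟨u, htau, hA, _⟩ | ⟨u, htau, hB, hk1, _⟩
    · rw [htau]
      exact hasOp_intro L C k u (by omega) hA
    · rw [htau]
      exact hasOp_forget L C k u hk1 (by omega) hB
  -- operation at parent of imax
  · right
    constructor
    · intro h
      have := congrArg Fin.val h
      rw [root_mk, Fin.val_last] at this
      simp only [Fin.val_mk] at this
      omega
    · have hpar : (mkDecomp L).parent ⟨k, by omega⟩ = (⟨k + 1, by omega⟩ : Fin (n+1)) := by
        apply Fin.ext
        rw [parent_mk, pparent_val]
        show min (k + 1) n = k + 1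
        omega
      rw [hpar]
      rcases hOpR with ⟨v, htau, hA, _⟩ | ⟨v, htau, hB, _⟩
      · rw [htau]
        exact hasOp_intro L C (k+1) v (by omega) hA
      · rw [htau]
        exact hasOp_forget L C (k+1) v (by omega) (by omega) hB

end Master
section Lists

variable {V : Type} [Fintype V] [DecidableEq V] {G : SimpleGraph V}

/-- Start position of each vertex. -/
def Afun (P F M R2 : List V) (pf : Option V) : V → ℕ := fun v =>
  if v ∈ P then P.idxOf v
  else if v ∈ M then P.length + F.length + M.idxOf v
  else P.length + F.length + M.length + (if pf = none then 0 else 1) + R2.idxOf v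

/-- End position of each vertex. -/
def Bfun (P F M R2 : List V) (pf : Option V) : V → ℕ := fun v =>
  if v ∈ F then P.length + F.idxOf v
  else if pf = some v then P.length + F.length + M.length
  else P.length + F.length + M.length + (if pf = none then 0 else 1) + R2.length

/-- Total number of events. -/
def total (P F M R2 : List V) (pf : Option V) : ℕ :=
  P.length + F.length + M.length + (if pf = none then 0 else 1) + R2.length

structure ListHyps (P F M R2 : List V) (pf : Option V) : Prop where
  hP : P.Nodup
  hF : F.Nodup
  hM : M.Nodup
  hR : R2.Nodup
  hFP : ∀ v ∈ F, v ∈ P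
  hPM : ∀ v ∈ P, v ∉ M
  hPR : ∀ v ∈ P, v ∉ R2
  hMR : ∀ v ∈ M, v ∉ R2
  hcov : ∀ v, v ∈ P ∨ v ∈ M ∨ v ∈ R2
  hpfPM : ∀ v, pf = some v → (v ∈ P ∨ v ∈ M)
  hpfF : ∀ v, pf = some v → v ∉ F

namespace ListHyps

variable {P F M R2 : List V} {pf : Option V} (H : ListHyps P F M R2 pf)

include H

theorem A_of_P {v : V} (h : v ∈ P) : Afun P F M R2 pf v = P.idxOf v := by
  simp [Afun, h]

theorem A_lt_P {v : V} (h : v ∈ P) : Afun P F M R2 pf v < P.length := by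
  rw [H.A_of_P h]; exact List.idxOf_lt_length_of_mem h

theorem A_of_M {v : V} (h : v ∈ M) :
    Afun P F M R2 pf v = P.length + F.length + M.idxOf v := by
  have hnp : v ∉ P := fun hp => H.hPM v hp h
  simp [Afun, hnp, h]

theorem A_range_M {v : V} (h : v ∈ M) :
    P.length + F.length ≤ Afun P F M R2 pf v ∧
      Afun P F M R2 pf v < P.length + F.length + M.length := by
  rw [H.A_of_M h]
  have := List.idxOf_lt_length_of_mem h
  omega

theorem A_of_R {v : V} (h : v ∈ R2) :
    Afun P F M R2 pf v = P.length + F.length + M.length +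
      (if pf = none then 0 else 1) + R2.idxOf v := by
  have hnp : v ∉ P := fun hp => H.hPR v hp h
  have hnm : v ∉ M := fun hm => H.hMR v hm h
  simp [Afun, hnp, hnm]

theorem A_range_R {v : V} (h : v ∈ R2) :
    P.length + F.length + M.length + (if pf = none then 0 else 1) ≤ Afun P F M R2 pf v ∧
      Afun P F M R2 pf v < total P F M R2 pf := by
  rw [H.A_of_R h]
  have := List.idxOf_lt_length_of_mem h
  unfold total
  omega

theorem A_lt_total (v : V) : Afun P F M R2 pf v < total P F M R2 pf := by
  rcases H.hcov v with h | h | h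
  · have := H.A_lt_P h; unfold total; omega
  · have := H.A_range_M h; unfold total; omega
  · exact (H.A_range_R h).2

theorem B_of_F {v : V} (h : v ∈ F) : Bfun P F M R2 pf v = P.length + F.idxOf v := by
  simp [Bfun, h]

theorem B_range_F {v : V} (h : v ∈ F) :
    P.length ≤ Bfun P F M R2 pf v ∧ Bfun P F M R2 pf v < P.length + F.length := by
  rw [H.B_of_F h]
  have := List.idxOf_lt_length_of_mem h
  omega

theorem B_of_pf {v : V} (h : pf = some v) :
    Bfun P F M R2 pf v = P.length + F.length + M.length := by
  have hnf : v ∉ F := H.hpfF v h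
  simp [Bfun, hnf, h]

theorem B_of_top {v : V} (h1 : v ∉ F) (h2 : pf ≠ some v) :
    Bfun P F M R2 pf v = total P F M R2 pf := by
  simp [Bfun, h1, h2, total]

theorem B_le_total (v : V) : Bfun P F M R2 pf v ≤ total P F M R2 pf := by
  by_cases h1 : v ∈ F
  · have := H.B_range_F h1; unfold total; omega
  · by_cases h2 : pf = some v
    · rw [H.B_of_pf h2]; unfold total; omega
    · rw [H.B_of_top h1 h2]

theorem B_ge_P (v : V) : P.length ≤ Bfun P F M R2 pf v := by
  by_cases h1 : v ∈ F
  · exact (H.B_range_F h1).1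
  · by_cases h2 : pf = some v
    · rw [H.B_of_pf h2]; omega
    · rw [H.B_of_top h1 h2]; unfold total; omega

theorem hAB (v : V) : Afun P F M R2 pf v < Bfun P F M R2 pf v := by
  by_cases h1 : v ∈ F
  · have hb := H.B_range_F h1
    have ha := H.A_lt_P (H.hFP v h1)
    omega
  · by_cases h2 : pf = some v
    · rw [H.B_of_pf h2]
      rcases H.hpfPM v h2 with h | h
      · have := H.A_lt_P h; omega
      · have := H.A_range_M h; omega
    · rw [H.B_of_top h1 h2]
      exact H.A_lt_total v

theorem A_inj {v w : V} (h : Afun P F M R2 pf v = Afun P F M R2 pf w) : v = w := by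
  rcases H.hcov v with hv | hv | hv <;> rcases H.hcov w with hw | hw | hw
  · rw [H.A_of_P hv, H.A_of_P hw] at h
    exact (List.idxOf_inj hv).1 h
  · have h1 := H.A_lt_P hv; have h2 := (H.A_range_M hw).1; omega
  · have h1 := H.A_lt_P hv; have h2 := (H.A_range_R hw).1; omega
  · have h1 := H.A_lt_P hw; have h2 := (H.A_range_M hv).1; omega
  · rw [H.A_of_M hv, H.A_of_M hw] at h
    refine (List.idxOf_inj hv).1 (by omega)
  · have h1 := (H.A_range_M hv).2; have h2 := (H.A_range_R hw).1
    split at h2 <;> omega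
  · have h1 := H.A_lt_P hw; have h2 := (H.A_range_R hv).1; omega
  · have h1 := (H.A_range_M hw).2; have h2 := (H.A_range_R hv).1
    split at h2 <;> omega
  · rw [H.A_of_R hv, H.A_of_R hw] at h
    refine (List.idxOf_inj hv).1 (by omega)

theorem A_ne_B (v w : V) : Afun P F M R2 pf v ≠ Bfun P F M R2 pf w := by
  by_cases h1 : w ∈ F
  · have hb := H.B_range_F h1
    rcases H.hcov v with hv | hv | hv
    · have := H.A_lt_P hv; omega
    · have := H.A_range_M hv; omega
    · have := H.A_range_R hv; omega
  · by_cases h2 : pf = some w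
    · rw [H.B_of_pf h2]
      have hpf1 : (if pf = none then 0 else 1) = 1 := by simp [h2]
      rcases H.hcov v with hv | hv | hv
      · have := H.A_lt_P hv; omega
      · have := (H.A_range_M hv).2; omega
      · have := (H.A_range_R hv).1; omega
    · rw [H.B_of_top h1 h2]
      have := H.A_lt_total v
      omega

theorem B_inj {v w : V} (hlt : Bfun P F M R2 pf v < total P F M R2 pf)
    (h : Bfun P F M R2 pf v = Bfun P F M R2 pf w) : v = w := by
  have hv : v ∈ F ∨ pf = some v := by
    by_contra hc
    push_neg at hc
    rw [H.B_of_top hc.1 hc.2] at hlt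
    omega
  have hw : w ∈ F ∨ pf = some w := by
    by_contra hc
    push_neg at hc
    rw [h, H.B_of_top hc.1 hc.2] at hlt
    omega
  rcases hv with hv | hv <;> rcases hw with hw | hw
  · rw [H.B_of_F hv, H.B_of_F hw] at h
    exact (List.idxOf_inj hv).1 (by omega)
  · have h1 := H.B_range_F hv
    rw [H.B_of_pf hw] at h
    omega
  · have h1 := H.B_range_F hw
    rw [H.B_of_pf hv] at h
    omega
  · rw [hv] at hw
    exact (Option.some_injective V (hw.symm)).symm

theorem huniq_lists (i : ℕ) (hi : i < total P F M R2 pf) (v w : V)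
    (hv : Afun P F M R2 pf v = i ∨ Bfun P F M R2 pf v = i)
    (hw : Afun P F M R2 pf w = i ∨ Bfun P F M R2 pf w = i) : v = w := by
  rcases hv with hv | hv <;> rcases hw with hw | hw
  · exact H.A_inj (hv.trans hw.symm)
  · exact absurd (hv.trans hw.symm) (H.A_ne_B v w)
  · exact absurd (hw.trans hv.symm) (H.A_ne_B w v)
  · exact H.B_inj (by omega) (hv.trans hw.symm)

theorem hexi_lists (i : ℕ) (hi : i < total P F M R2 pf) :
    ∃ v, Afun P F M R2 pf v = i ∨ Bfun P F M R2 pf v = i := by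
  set p := P.length
  set f := F.length
  set m := M.length
  by_cases h1 : i < p
  · refine ⟨P[i], Or.inl ?_⟩
    have hm : P[i] ∈ P := List.getElem_mem h1
    rw [H.A_of_P hm]
    exact H.hP.idxOf_getElem i h1
  · by_cases h2 : i < p + f
    · have hif : i - p < f := by omega
      refine ⟨F[i-p], Or.inr ?_⟩
      have hm : F[i-p] ∈ F := List.getElem_mem hif
      rw [H.B_of_F hm, H.hF.idxOf_getElem _ hif]
      omega
    · by_cases h3 : i < p + f + m
      · have him : i - (p + f) < m := by omega
        refine ⟨M[i - (p+f)], Or.inl ?_⟩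
        have hm : M[i - (p+f)] ∈ M := List.getElem_mem him
        rw [H.A_of_M hm, H.hM.idxOf_getElem _ him]
        omega
      · rcases hpf : pf with _ | w
        · subst hpf
          have h4 : i - (p + f + m) < R2.length := by
            unfold total at hi
            rw [show (if (none : Option V) = none then 0 else 1) = 0 from rfl] at hi
            omega
          refine ⟨R2[i - (p+f+m)], Or.inl ?_⟩
          have hm : R2[i - (p+f+m)] ∈ R2 := List.getElem_mem h4
          rw [H.A_of_R hm, H.hR.idxOf_getElem _ h4, if_pos rfl]
          omega
        · subst hpf
          by_cases h4 : i = p + f + m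
          · refine ⟨w, Or.inr ?_⟩
            rw [H.B_of_pf rfl]
            omega
          · have h5 : i - (p + f + m + 1) < R2.length := by
              unfold total at hi
              rw [show (if some w = none then 0 else 1) = 1 from rfl] at hi
              omega
            refine ⟨R2[i - (p+f+m+1)], Or.inl ?_⟩
            have hm : R2[i - (p+f+m+1)] ∈ R2 := List.getElem_mem h5
            rw [H.A_of_R hm, H.hR.idxOf_getElem _ h5,
              if_neg (by simp : ¬(some w = none))]
            omega

theorem toLayout (htot : 1 ≤ total P F M R2 pf)
    (hedge : ∀ a b, G.Adj a b → Afun P F M R2 pf a < Bfun P F M R2 pf b) :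
    Layout G (total P F M R2 pf - 1) (Afun P F M R2 pf) (Bfun P F M R2 pf) where
  hAB := H.hAB
  hAn := fun v => by have := H.A_lt_total v; omega
  hBn := fun v => by have := H.B_le_total v; omega
  huniq := fun i hi v w hv hw => H.huniq_lists i (by omega) v w hv hw
  hexi := fun i hi => H.hexi_lists i (by omega)
  hedge := hedge

end ListHyps

end Lists
section Assemble

variable {V : Type} [Fintype V] [DecidableEq V] {G : SimpleGraph V}

theorem assemble (C : Set V) (Q : TDQuint V)
    (P F M R2 : List V) (pf : Option V)
    (hLCc : ∀ v ∈ Q.LC, v ∈ C) (hXCc : ∀ v ∈ Q.XC, v ∈ C) (hRCc : ∀ v ∈ Q.RC, v ∈ C)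
    (hLX : ∀ v ∈ Q.LC, v ∉ Q.XC) (hXR : ∀ v ∈ Q.XC, v ∉ Q.RC) (hLR : ∀ v ∈ Q.LC, v ∉ Q.RC)
    (hcovC : ∀ v ∈ C, v ∈ Q.LC ∨ v ∈ Q.XC ∨ v ∈ Q.RC)
    (hPset : ∀ v, v ∈ P ↔ ((v ∉ C ∨ v ∈ Q.LC ∨ v ∈ Q.XC) ∧ v ∉ M))
    (hFset : ∀ v, v ∈ F ↔ v ∈ Q.LC)
    (hR2set : ∀ v, v ∈ R2 ↔ v ∈ Q.RC)
    (hMXC : ∀ v ∈ M, v ∈ Q.XC)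
    (hPnd : P.Nodup) (hFnd : F.Nodup) (hR2nd : R2.Nodup)
    (hMFadj : ∀ a ∈ M, ∀ b ∈ F, ¬ G.Adj a b)
    (hR2Fadj : ∀ a ∈ R2, ∀ b ∈ F, ¬ G.Adj a b)
    (hpfR2adj : ∀ b, pf = some b → ∀ a ∈ R2, ¬ G.Adj a b)
    (hOpL : (∃ u, Q.tauL = TDOp.introduce u ∧ M = [u] ∧ u ∈ Q.XC) ∨
            (∃ u F', Q.tauL = TDOp.forget u ∧ M = [] ∧ F = F' ++ [u] ∧ u ∈ Q.LC))
    (hOpR : (∃ v R', Q.tauR = TDOp.introduce v ∧ pf = none ∧ R2 = v :: R' ∧ v ∈ Q.RC) ∨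
            (∃ v, Q.tauR = TDOp.forget v ∧ pf = some v ∧ v ∈ Q.XC)) :
    ValidQuintP G C Q := by
  have hMnd : M.Nodup := by
    rcases hOpL with ⟨u, _, hM, _⟩ | ⟨u, F', _, hM, _, _⟩ <;> rw [hM] <;> simp
  have hMC : ∀ v ∈ M, v ∈ C := fun v hv => hXCc v (hMXC v hv)
  have H : ListHyps P F M R2 pf := by
    refine ⟨hPnd, hFnd, hMnd, hR2nd, ?_, ?_, ?_, ?_, ?_, ?_, ?_⟩
    · intro v hv
      have hvL := (hFset v).1 hv
      rw [hPset]
      exact ⟨Or.inr (Or.inl hvL), fun hm => hLX v hvL (hMXC v hm)⟩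
    · intro v hv
      exact ((hPset v).1 hv).2
    · intro v hv hr
      have hvR := (hR2set v).1 hr
      rcases ((hPset v).1 hv).1 with h | h | h
      · exact h (hRCc v hvR)
      · exact hLR v h hvR
      · exact hXR v h hvR
    · intro v hv hr
      exact hXR v (hMXC v hv) ((hR2set v).1 hr)
    · intro v
      by_cases hm : v ∈ M
      · exact Or.inr (Or.inl hm)
      · by_cases hc : v ∈ C
        · rcases hcovC v hc with h | h | h
          · exact Or.inl ((hPset v).2 ⟨Or.inr (Or.inl h), hm⟩)
          · exact Or.inl ((hPset v).2 ⟨Or.inr (Or.inr h), hm⟩)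
          · exact Or.inr (Or.inr ((hR2set v).2 h))
        · exact Or.inl ((hPset v).2 ⟨Or.inl hc, hm⟩)
    · intro v hpf
      have hvX : v ∈ Q.XC := by
        rcases hOpR with ⟨w, R', _, hw, _, _⟩ | ⟨w, _, hw, hwX⟩
        · rw [hw] at hpf; exact absurd hpf (by simp)
        · rw [hw] at hpf
          injection hpf with h
          rw [← h]; exact hwX
      by_cases hm : v ∈ M
      · exact Or.inr hm
      · exact Or.inl ((hPset v).2 ⟨Or.inr (Or.inr hvX), hm⟩)
    · intro v hpf hvF
      have hvL := (hFset v).1 hvF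
      rcases hOpR with ⟨w, R', _, hw, _, _⟩ | ⟨w, _, hw, hwX⟩
      · rw [hw] at hpf; exact absurd hpf (by simp)
      · rw [hw] at hpf
        injection hpf with h
        exact hLX v hvL (h ▸ hwX)
  set p := P.length with hp
  set f := F.length with hf
  set m := M.length with hm
  have hfm1 : 1 ≤ f + m := by
    rcases hOpL with ⟨u, _, hM, _⟩ | ⟨u, F', _, _, hF, _⟩
    · have : m = 1 := by rw [hm, hM]; rfl
      omega
    · have : 1 ≤ f := by rw [hf, hF]; simp
      omega
  have htail : (if pf = none then 0 else 1) + R2.length ≥ 1 := by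
    rcases hOpR with ⟨v, R', _, hpf, hR2, _⟩ | ⟨v, _, hpf, _⟩
    · have : 1 ≤ R2.length := by rw [hR2]; simp
      omega
    · rw [hpf]; simp
  have htoteq : total P F M R2 pf = p + f + m + ((if pf = none then 0 else 1) + R2.length) := by
    unfold total; omega
  have htot : 1 ≤ total P F M R2 pf := by omega
  have hedge : ∀ a b, G.Adj a b → Afun P F M R2 pf a < Bfun P F M R2 pf b := by
    intro a b hab
    by_cases hbF : b ∈ F
    · have hBb := H.B_range_F hbF
      rcases H.hcov a with ha | ha | ha
      · have := H.A_lt_P ha; omega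
      · exact absurd hab (hMFadj a ha b hbF)
      · exact absurd hab (hR2Fadj a ha b hbF)
    · by_cases hbpf : pf = some b
      · rw [H.B_of_pf hbpf]
        rcases H.hcov a with ha | ha | ha
        · have := H.A_lt_P ha; omega
        · have := H.A_range_M ha; omega
        · exact absurd hab (hpfR2adj b hbpf a ha)
      · rw [H.B_of_top hbF hbpf]
        have := H.A_lt_total a
        omega
  have L := H.toLayout htot hedge
  set k := p + f + m - 1 with hk
  have hkn : k < total P F M R2 pf - 1 := by omega
  -- characterizations of A ≤ k etc.
  have hAleK : ∀ v, Afun P F M R2 pf v ≤ k ↔ (v ∈ P ∨ v ∈ M) := by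
    intro v
    constructor
    · intro hle
      rcases H.hcov v with h | h | h
      · exact Or.inl h
      · exact Or.inr h
      · have := (H.A_range_R h).1
        exfalso
        omega
    · rintro (h | h)
      · have := H.A_lt_P h; omega
      · have := H.A_range_M h; omega
  have hBleK : ∀ v, Bfun P F M R2 pf v ≤ k ↔ v ∈ F := by
    intro v
    constructor
    · intro hle
      by_cases hvF : v ∈ F
      · exact hvF
      · by_cases hvpf : pf = some v
        · rw [H.B_of_pf hvpf] at hle; omega
        · rw [H.B_of_top hvF hvpf] at hle; omega
    · intro hvF
      have := H.B_range_F hvF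
      omega
  apply master C Q (total P F M R2 pf - 1) k (Afun P F M R2 pf) (Bfun P F M R2 pf) L hkn
  -- h1
  · ext v
    simp only [Set.mem_inter_iff, Set.mem_setOf_eq]
    constructor
    · rintro ⟨hb, _⟩
      exact (hFset v).1 ((hBleK v).1 hb)
    · intro hv
      exact ⟨(hBleK v).2 ((hFset v).2 hv), hLCc v hv⟩
  -- h2
  · ext v
    simp only [Set.mem_inter_iff, Set.mem_setOf_eq]
    constructor
    · rintro ⟨⟨ha, hb⟩, hc⟩
      have hvnF : v ∉ F := fun hvF => by have := (hBleK v).2 hvF; omega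
      have hvnL : v ∉ Q.LC := fun h => hvnF ((hFset v).2 h)
      rcases (hAleK v).1 ha with h | h
      · rcases ((hPset v).1 h).1 with h' | h' | h'
        · exact absurd hc h'
        · exact absurd h' hvnL
        · exact h'
      · exact hMXC v h
    · intro hv
      have hc := hXCc v hv
      have hvnF : v ∉ F := fun hvF => hLX v ((hFset v).1 hvF) hv
      refine ⟨⟨?_, ?_⟩, hc⟩
      · apply (hAleK v).2
        by_cases hm' : v ∈ M
        · exact Or.inr hm'
        · exact Or.inl ((hPset v).2 ⟨Or.inr (Or.inr hv), hm'⟩)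
      · by_cases hvpf : pf = some v
        · rw [H.B_of_pf hvpf]; omega
        · rw [H.B_of_top hvnF hvpf]; omega
  -- h3
  · ext v
    simp only [Set.mem_inter_iff, Set.mem_setOf_eq]
    constructor
    · rintro ⟨ha, _⟩
      have hvnPM : ¬(v ∈ P ∨ v ∈ M) := fun h => by have := (hAleK v).2 h; omega
      rcases H.hcov v with h | h | h
      · exact absurd (Or.inl h) hvnPM
      · exact absurd (Or.inr h) hvnPM
      · exact (hR2set v).1 h
    · intro hv
      have h := (hR2set v).2 hv
      have := (H.A_range_R h).1
      exact ⟨by omega, hRCc v hv⟩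
  -- hOpL
  · rcases hOpL with ⟨u, htau, hM, huX⟩ | ⟨u, F', htau, hM, hF', huL⟩
    · left
      refine ⟨u, htau, ?_, huX⟩
      have hum : u ∈ M := by rw [hM]; simp
      rw [H.A_of_M hum, hM]
      have : m = 1 := by rw [hm, hM]; rfl
      simp [List.idxOf_cons_self]
      omega
    · right
      have huF : u ∈ F := by rw [hF']; simp
      have hp1 : 1 ≤ p := by
        have := H.hFP u huF
        rw [hp]
        exact List.length_pos_iff.2 (fun h => by rw [h] at this; simp at this)
      have hm0 : m = 0 := by rw [hm, hM]; rfl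
      have hf' : f = F'.length + 1 := by rw [hf, hF']; simp
      refine ⟨u, htau, ?_, by omega, huL⟩
      rw [H.B_of_F huF, hF']
      have hunF' : u ∉ F' := by
        have := hFnd
        rw [hF'] at this
        have h2 := List.disjoint_of_nodup_append this
        intro hu
        exact h2 hu (by simp)
      rw [List.idxOf_append_of_notMem hunF']
      simp [List.idxOf_cons_self]
      omega
  -- hOpR
  · rcases hOpR with ⟨v, R', htau, hpf, hR2, hvR⟩ | ⟨v, htau, hpf, hvX⟩
    · left
      refine ⟨v, htau, ?_, hvR⟩
      have hvr : v ∈ R2 := by rw [hR2]; simp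
      rw [H.A_of_R hvr, hpf, hR2]
      simp [List.idxOf_cons_self]
      omega
    · right
      refine ⟨v, htau, ?_, hvX⟩
      rw [H.B_of_pf hpf]
      omega

end Assemble
end VQP
theorem validQuintP_of_conditions {V : Type} [Fintype V] [DecidableEq V]
    (G : SimpleGraph V) (C : Set V) (hC : IsVertexCover G C)
    (Q : TDQuint V) (hvp : ValidPartition G C Q.LC Q.XC Q.RC)
    (hL : (∃ u, Q.tauL = TDOp.introduce u ∧ u ∈ Q.XC ∧ G.neighborSet u ∩ Q.LC = ∅) ∨
      (∃ u, Q.tauL = TDOp.forget u ∧ u ∈ Q.LC))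
    (hR : (∃ v, Q.tauR = TDOp.introduce v ∧ v ∈ Q.RC) ∨
      (∃ v, Q.tauR = TDOp.forget v ∧ v ∈ Q.XC ∧ G.neighborSet v ∩ Q.RC = ∅)) :
    ValidQuintP G C Q := by
  classical
  obtain ⟨ι, t, i, hLCe, hXCe, hRCe⟩ := hvp
  have hbagsub : ∀ v ∈ t.bag i, v ∈ t.subVerts i := fun v hv => ⟨i, ⟨0, rfl⟩, hv⟩
  have hLCc : ∀ v ∈ Q.LC, v ∈ C := by intro v hv; rw [hLCe] at hv; exact hv.2
  have hXCc : ∀ v ∈ Q.XC, v ∈ C := by intro v hv; rw [hXCe] at hv; exact hv.2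
  have hRCc : ∀ v ∈ Q.RC, v ∈ C := by intro v hv; rw [hRCe] at hv; exact hv.2
  have hLX : ∀ v ∈ Q.LC, v ∉ Q.XC := by
    intro v hv hx
    rw [hLCe] at hv; rw [hXCe] at hx
    exact hv.1.2 hx.1
  have hXR : ∀ v ∈ Q.XC, v ∉ Q.RC := by
    intro v hv hx
    rw [hXCe] at hv; rw [hRCe] at hx
    exact hx.1.2 (hbagsub v hv.1)
  have hLR : ∀ v ∈ Q.LC, v ∉ Q.RC := by
    intro v hv hx
    rw [hLCe] at hv; rw [hRCe] at hx
    exact hx.1.2 hv.1.1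
  have hcovC : ∀ v ∈ C, v ∈ Q.LC ∨ v ∈ Q.XC ∨ v ∈ Q.RC := by
    intro v hc
    by_cases hs : v ∈ t.subVerts i
    · by_cases hb : v ∈ t.bag i
      · exact Or.inr (Or.inl (by rw [hXCe]; exact ⟨hb, hc⟩))
      · exact Or.inl (by rw [hLCe]; exact ⟨⟨hs, hb⟩, hc⟩)
    · exact Or.inr (Or.inr (by rw [hRCe]; exact ⟨⟨trivial, hs⟩, hc⟩))
  have hLRadj : ∀ l ∈ Q.LC, ∀ r ∈ Q.RC, ¬ G.Adj l r := by
    intro l hl r hr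
    rw [hLCe] at hl; rw [hRCe] at hr
    exact VQP.no_LR_adj t i hl.1 hr.1
  have hLpack : ∃ P F M_ : List V,
      (∀ w, w ∈ P ↔ ((w ∉ C ∨ w ∈ Q.LC ∨ w ∈ Q.XC) ∧ w ∉ M_)) ∧
      (∀ w, w ∈ F ↔ w ∈ Q.LC) ∧ (∀ w ∈ M_, w ∈ Q.XC) ∧ P.Nodup ∧ F.Nodup ∧
      (∀ a ∈ M_, ∀ b ∈ F, ¬ G.Adj a b) ∧
      ((∃ u, Q.tauL = TDOp.introduce u ∧ M_ = [u] ∧ u ∈ Q.XC) ∨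
        (∃ u F', Q.tauL = TDOp.forget u ∧ M_ = [] ∧ F = F' ++ [u] ∧ u ∈ Q.LC)) := by
    rcases hL with ⟨u, htL, huX, huNL⟩ | ⟨u, htL, huL⟩
    · refine ⟨({w | (w ∉ C ∨ w ∈ Q.LC ∨ w ∈ Q.XC) ∧ w ≠ u}.toFinite.toFinset).toList,
        (Q.LC.toFinite.toFinset).toList, [u], ?_, ?_, ?_, Finset.nodup_toList _,
        Finset.nodup_toList _, ?_, Or.inl ⟨u, htL, rfl, huX⟩⟩
      · intro w
        simp [Set.Finite.mem_toFinset, Set.mem_setOf_eq]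
      · intro w
        simp [Set.Finite.mem_toFinset, Set.mem_setOf_eq]
      · intro w hw
        simp only [List.mem_singleton] at hw
        subst hw
        exact huX
      · intro a ha b hb hadj
        simp only [List.mem_singleton] at ha
        subst ha
        rw [Finset.mem_toList, Set.Finite.mem_toFinset] at hb
        have hmem : b ∈ G.neighborSet a ∩ Q.LC := ⟨hadj, hb⟩
        rw [huNL] at hmem
        exact hmem
    · refine ⟨({w | w ∉ C ∨ w ∈ Q.LC ∨ w ∈ Q.XC}.toFinite.toFinset).toList,
        ((Q.LC \ {u}).toFinite.toFinset).toList ++ [u], [], ?_, ?_, ?_, Finset.nodup_toList _,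
        ?_, ?_, Or.inr ⟨u, ((Q.LC \ {u}).toFinite.toFinset).toList, htL, rfl, rfl, huL⟩⟩
      · intro w
        simp [Set.Finite.mem_toFinset, Set.mem_setOf_eq]
      · intro w
        simp only [List.mem_append, Finset.mem_toList, Set.Finite.mem_toFinset,
          Set.mem_diff, Set.mem_singleton_iff, List.mem_singleton]
        constructor
        · rintro (⟨h, _⟩ | rfl)
          · exact h
          · exact huL
        · intro h
          by_cases hw : w = u
          · exact Or.inr hw
          · exact Or.inl ⟨h, hw⟩
      · intro w hw
        simp at hw
      · rw [List.nodup_append]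
        refine ⟨Finset.nodup_toList _, by simp, ?_⟩
        intro a ha b hb
        simp only [List.mem_singleton] at hb
        subst hb
        rw [Finset.mem_toList, Set.Finite.mem_toFinset] at ha
        exact fun h => ha.2 h
      · intro a ha
        simp at ha
  have hRpack : ∃ (R2 : List V) (pf : Option V),
      (∀ w, w ∈ R2 ↔ w ∈ Q.RC) ∧ R2.Nodup ∧
      (∀ b, pf = some b → ∀ a ∈ R2, ¬ G.Adj a b) ∧
      ((∃ v R', Q.tauR = TDOp.introduce v ∧ pf = none ∧ R2 = v :: R' ∧ v ∈ Q.RC) ∨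
        (∃ v, Q.tauR = TDOp.forget v ∧ pf = some v ∧ v ∈ Q.XC)) := by
    rcases hR with ⟨v, htR, hvR⟩ | ⟨v, htR, hvX, hvNR⟩
    · refine ⟨v :: ((Q.RC \ {v}).toFinite.toFinset).toList, none, ?_, ?_, ?_,
        Or.inl ⟨v, _, htR, rfl, rfl, hvR⟩⟩
      · intro w
        simp only [List.mem_cons, Finset.mem_toList, Set.Finite.mem_toFinset,
          Set.mem_diff, Set.mem_singleton_iff]
        constructor
        · rintro (rfl | ⟨h, _⟩)
          · exact hvR
          · exact h
        · intro h
          by_cases hw : w = v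
          · exact Or.inl hw
          · exact Or.inr ⟨h, hw⟩
      · rw [List.nodup_cons]
        refine ⟨?_, Finset.nodup_toList _⟩
        rw [Finset.mem_toList, Set.Finite.mem_toFinset]
        simp
      · intro b hb
        simp at hb
    · refine ⟨(Q.RC.toFinite.toFinset).toList, some v, ?_, Finset.nodup_toList _, ?_,
        Or.inr ⟨v, htR, rfl, hvX⟩⟩
      · intro w
        simp [Set.Finite.mem_toFinset, Set.mem_setOf_eq]
      · intro b hb a ha hadj
        have hbv : b = v := by
          injection hb with h
          exact h.symm
        subst hbv
        rw [Finset.mem_toList, Set.Finite.mem_toFinset] at ha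
        have hmem : a ∈ G.neighborSet b ∩ Q.RC := ⟨hadj.symm, ha⟩
        rw [hvNR] at hmem
        exact hmem
  obtain ⟨P, F, M, hPset, hFset, hMXC, hPnd, hFnd, hMFadj, hOpL'⟩ := hLpack
  obtain ⟨R2, pf, hR2set, hR2nd, hpfadj, hOpR'⟩ := hRpack
  exact VQP.assemble C Q P F M R2 pf hLCc hXCc hRCc hLX hXR hLR hcovC hPset hFset hR2set hMXC
    hPnd hFnd hR2nd hMFadj
    (fun a ha b hb hadj => hLRadj b ((hFset b).1 hb) a ((hR2set a).1 ha) hadj.symm)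
    hpfadj hOpL' hOpR'
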